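/- arXiv:2603.08087 — 5 statements merged into one kernel-verified Lean document; each statement's English description precedes it below -/
import Mathlib

section
/- Suppose there exists x_ν ∈ X attaining v(ν) (i.e., v(ν) is finite and g(x_ν) + ∫_Ξ Q(x_ν,ξ) dν(ξ) = v(ν)), that Q(x_ν,·) is integrable with respect to both P and ν, and that there exist a measurable cost c : Ξ × Ξ → [0,∞] and a constant β > 0 such that R(ξ,ξ') ≤ β·c(ξ,ξ') for all ξ, ξ' ∈ Ξ (regret domination). Then v(P) − v(ν) ≤ β·T_c(P,ν), the inequality being interpreted in the extended reals (trivially true when T_c(P,ν) = ∞). -/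
open MeasureTheory ENNReal

/-- The set of couplings of two probability measures on `Ξ`: probability measures on
`Ξ × Ξ` whose first marginal is `μ` and second marginal is `ν`. -/
def Couplings {Ξ : Type*} [MeasurableSpace Ξ] (μ ν : Measure Ξ) : Set (Measure (Ξ × Ξ)) :=
  {π | IsProbabilityMeasure π ∧ π.map Prod.fst = μ ∧ π.map Prod.snd = ν}

/-- Optimal transport cost `T_c(μ,ν) = inf over couplings of ∫ c dπ`, in `[0,∞]`. -/
noncomputable def transportCost {Ξ : Type*} [MeasurableSpace Ξ] (c : Ξ → Ξ → ℝ≥0∞)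
    (μ ν : Measure Ξ) : ℝ≥0∞ :=
  ⨅ π ∈ Couplings μ ν, ∫⁻ p, c p.1 p.2 ∂π

/-- If `x_ν` attains `v(ν)`, `Q(x_ν,·)` is integrable w.r.t. `P` and `ν`,
and regret domination `R(ξ,ξ') ≤ β·c(ξ,ξ')` holds, then
`v(P) − v(ν) ≤ β·T_c(P,ν)` in the extended reals. -/
theorem stmt0 {Ξ X : Type*} [MeasurableSpace Ξ] [Nonempty X]
    (g : X → ℝ) (Q : X → Ξ → ℝ) (hQmeas : ∀ x, Measurable (Q x))
    (P ν : Measure Ξ) [IsProbabilityMeasure P] [IsProbabilityMeasure ν]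
    (c : Ξ → Ξ → ℝ≥0∞) (hcmeas : Measurable fun p : Ξ × Ξ => c p.1 p.2)
    (β : ℝ) (hβ : 0 < β)
    -- regret domination: `R(ξ,ξ') = sup_x (Q(x,ξ) − Q(x,ξ')) ≤ β·c(ξ,ξ')`
    (hdom : ∀ ξ ξ' : Ξ,
      (⨆ x : X, ((Q x ξ - Q x ξ' : ℝ) : EReal)) ≤ (β : EReal) * ((c ξ ξ' : ℝ≥0∞) : EReal))
    -- `x_ν` attains `v(ν)`
    (vν : ℝ) (xν : X)
    (hattain : g xν + ∫ ξ, Q xν ξ ∂ν = vν)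
    (hmin : ∀ x : X, vν ≤ g x + ∫ ξ, Q x ξ ∂ν)
    -- integrability of `Q(x_ν, ·)` w.r.t. both measures
    (hintP : Integrable (Q xν) P) (hintν : Integrable (Q xν) ν) :
    (⨅ x : X, ((g x + ∫ ξ, Q x ξ ∂P : ℝ) : EReal)) - (vν : EReal)
      ≤ (β : EReal) * ((transportCost c P ν : ℝ≥0∞) : EReal) := by
  set a : ℝ := (∫ ξ, Q xν ξ ∂P) - ∫ ξ, Q xν ξ ∂ν with ha
  have hQsm : StronglyMeasurable (Q xν) := (hQmeas xν).stronglyMeasurable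
  -- key per-coupling estimate
  have key : ∀ π ∈ Couplings P ν, (∫⁻ p : Ξ × Ξ, c p.1 p.2 ∂π) ≠ ⊤ →
      a ≤ β * (∫⁻ p : Ξ × Ξ, c p.1 p.2 ∂π).toReal := by
    rintro π ⟨hπprob, hfst, hsnd⟩ hfin
    haveI := hπprob
    have hint1 : Integrable (fun p : Ξ × Ξ => Q xν p.1) π := by
      have := (integrable_map_measure (f := Prod.fst) (g := Q xν)
        hQsm.aestronglyMeasurable measurable_fst.aemeasurable).mp (by rwa [hfst])
      exact this
    have hint2 : Integrable (fun p : Ξ × Ξ => Q xν p.2) π := by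
      have := (integrable_map_measure (f := Prod.snd) (g := Q xν)
        hQsm.aestronglyMeasurable measurable_snd.aemeasurable).mp (by rwa [hsnd])
      exact this
    have hIP : ∫ ξ, Q xν ξ ∂P = ∫ p : Ξ × Ξ, Q xν p.1 ∂π := by
      rw [← hfst, integral_map measurable_fst.aemeasurable hQsm.aestronglyMeasurable]
    have hIν : ∫ ξ, Q xν ξ ∂ν = ∫ p : Ξ × Ξ, Q xν p.2 ∂π := by
      rw [← hsnd, integral_map measurable_snd.aemeasurable hQsm.aestronglyMeasurable]
    have hae := ae_lt_top hcmeas hfin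
    have hptwise : ∀ᵐ p ∂π, Q xν p.1 - Q xν p.2 ≤ β * (c p.1 p.2).toReal := by
      filter_upwards [hae] with p hp
      have h1 : ((Q xν p.1 - Q xν p.2 : ℝ) : EReal) ≤ (β : EReal) * ((c p.1 p.2 : ℝ≥0∞) : EReal) :=
        le_trans (le_iSup (fun x : X => ((Q x p.1 - Q x p.2 : ℝ) : EReal)) xν) (hdom p.1 p.2)
      have hc : ((c p.1 p.2 : ℝ≥0∞) : EReal) = (((c p.1 p.2).toReal : ℝ) : EReal) := by
        rw [← ENNReal.ofReal_toReal hp.ne, EReal.coe_ennreal_ofReal,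
          max_eq_left ENNReal.toReal_nonneg, ENNReal.toReal_ofReal ENNReal.toReal_nonneg]
      rw [hc, ← EReal.coe_mul] at h1
      exact_mod_cast h1
    have hcint : Integrable (fun p : Ξ × Ξ => (c p.1 p.2).toReal) π :=
      integrable_toReal_of_lintegral_ne_top hcmeas.aemeasurable hfin
    calc a = ∫ p : Ξ × Ξ, (Q xν p.1 - Q xν p.2) ∂π := by
            rw [ha, hIP, hIν, ← integral_sub hint1 hint2]
      _ ≤ ∫ p : Ξ × Ξ, β * (c p.1 p.2).toReal ∂π :=
            integral_mono_ae (hint1.sub hint2) (hcint.const_mul β) hptwise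
      _ = β * (∫⁻ p : Ξ × Ξ, c p.1 p.2 ∂π).toReal := by
            rw [integral_const_mul, integral_toReal hcmeas.aemeasurable hae]
  -- reduce LHS to `a`
  have step1 : (⨅ x : X, ((g x + ∫ ξ, Q x ξ ∂P : ℝ) : EReal)) - (vν : EReal) ≤ ((a : ℝ) : EReal) := by
    have hA : (⨅ x : X, ((g x + ∫ ξ, Q x ξ ∂P : ℝ) : EReal))
        ≤ ((g xν + ∫ ξ, Q xν ξ ∂P : ℝ) : EReal) :=
      iInf_le (fun x : X => ((g x + ∫ ξ, Q x ξ ∂P : ℝ) : EReal)) xν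
    have h2 := add_le_add_left hA (-(vν : EReal))
    rw [← sub_eq_add_neg, ← sub_eq_add_neg] at h2
    refine h2.trans ?_
    rw [← EReal.coe_sub]
    have : g xν + (∫ ξ, Q xν ξ ∂P) - vν = a := by rw [← hattain, ha]; ring
    rw [this]
  refine step1.trans ?_
  rcases le_or_gt a 0 with h0 | h0
  · refine le_trans ?_ (mul_nonneg (by exact_mod_cast hβ.le) (EReal.coe_ennreal_nonneg _))
    exact_mod_cast h0
  · have hb0 : ENNReal.ofReal β ≠ 0 := by
      simp [ENNReal.ofReal_eq_zero, not_le, hβ]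
    have hbt : ENNReal.ofReal β ≠ ⊤ := ofReal_ne_top
    have hdiv : ∀ π ∈ Couplings P ν,
        ENNReal.ofReal a / ENNReal.ofReal β ≤ ∫⁻ p : Ξ × Ξ, c p.1 p.2 ∂π := by
      intro π hπ
      rcases eq_or_ne (∫⁻ p : Ξ × Ξ, c p.1 p.2 ∂π) ⊤ with ht | ht
      · simp [ht]
      · rw [ENNReal.div_le_iff_le_mul (Or.inl hb0) (Or.inl hbt)]
        calc ENNReal.ofReal a
            ≤ ENNReal.ofReal (β * (∫⁻ p : Ξ × Ξ, c p.1 p.2 ∂π).toReal) :=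
              ENNReal.ofReal_le_ofReal (key π hπ ht)
          _ = (∫⁻ p : Ξ × Ξ, c p.1 p.2 ∂π) * ENNReal.ofReal β := by
              rw [ENNReal.ofReal_mul hβ.le, ENNReal.ofReal_toReal ht, mul_comm]
    have hT : ENNReal.ofReal a / ENNReal.ofReal β ≤ transportCost c P ν := le_iInf₂ hdiv
    have hfin2 : ENNReal.ofReal a ≤ ENNReal.ofReal β * transportCost c P ν := by
      calc ENNReal.ofReal a
          = ENNReal.ofReal β * (ENNReal.ofReal a / ENNReal.ofReal β) :=
            (ENNReal.mul_div_cancel' (fun h => absurd h hb0) (fun h => absurd h hbt)).symm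
        _ ≤ _ := mul_le_mul_right hT _
    calc ((a : ℝ) : EReal) = ((ENNReal.ofReal a : ℝ≥0∞) : EReal) := by
          rw [EReal.coe_ennreal_ofReal, max_eq_left h0.le]
      _ ≤ ((ENNReal.ofReal β * transportCost c P ν : ℝ≥0∞) : EReal) := by
          exact_mod_cast hfin2
      _ = (β : EReal) * ((transportCost c P ν : ℝ≥0∞) : EReal) := by
          rw [EReal.coe_ennreal_mul, EReal.coe_ennreal_ofReal, max_eq_left hβ.le]
end

section
/- Suppose there exist x_P ∈ X attaining v(P) and x_ν ∈ X attaining v(ν) (both optimal values finite), that Q(x_P,·) and Q(x_ν,·) are integrable with respect to both P and ν, and that there exist a measurable cost c : Ξ × Ξ → [0,∞] and a constant β > 0 such that R(ξ,ξ') ≤ β·c(ξ,ξ') for all ξ, ξ' ∈ Ξ. Then |v(P) − v(ν)| ≤ β·max{T_c(P,ν), T_c(ν,P)}, the inequality being interpreted in the extended reals. -/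
open MeasureTheory ENNReal

-- key per-coupling bound
lemma key {Ξ : Type*} [MeasurableSpace Ξ] (f : Ξ → ℝ) (hf : Measurable f)
    (μ₁ μ₂ : Measure Ξ) (c : Ξ → Ξ → ℝ≥0∞)
    (hcmeas : Measurable fun p : Ξ × Ξ => c p.1 p.2)
    (β : ℝ) (hβ : 0 < β)
    (hdom : ∀ ξ ξ' : Ξ, ((f ξ - f ξ' : ℝ) : EReal) ≤ (β : EReal) * ((c ξ ξ' : ℝ≥0∞) : EReal))
    (hint1 : Integrable f μ₁) (hint2 : Integrable f μ₂)
    (π : Measure (Ξ × Ξ)) (hπ : π ∈ Couplings μ₁ μ₂) :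
    ENNReal.ofReal ((∫ ξ, f ξ ∂μ₁) - ∫ ξ, f ξ ∂μ₂)
      ≤ ENNReal.ofReal β * ∫⁻ p, c p.1 p.2 ∂π := by
  obtain ⟨hprob, hfst, hsnd⟩ := hπ
  by_cases hI : ∫⁻ p, c p.1 p.2 ∂π = ∞
  · rw [hI, ENNReal.mul_top (by simpa using hβ.le.lt_of_ne' (by simpa using hβ.ne'))]
    exact le_top
  -- c is a.e. finite
  have hae : ∀ᵐ p ∂π, c p.1 p.2 < ∞ := ae_lt_top hcmeas hI
  -- integrals pull back along the coupling
  have h1 : ∫ p, f p.1 ∂π = ∫ ξ, f ξ ∂μ₁ := by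
    rw [← hfst, integral_map measurable_fst.aemeasurable hf.aestronglyMeasurable]
  have h2 : ∫ p, f p.2 ∂π = ∫ ξ, f ξ ∂μ₂ := by
    rw [← hsnd, integral_map measurable_snd.aemeasurable hf.aestronglyMeasurable]
  have hi1 : Integrable (fun p : Ξ × Ξ => f p.1) π :=
    (integrable_map_measure hf.aestronglyMeasurable measurable_fst.aemeasurable).mp
      (by rwa [hfst])
  have hi2 : Integrable (fun p : Ξ × Ξ => f p.2) π :=
    (integrable_map_measure hf.aestronglyMeasurable measurable_snd.aemeasurable).mp
      (by rwa [hsnd])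
  -- real-valued dominating function
  set h : Ξ × Ξ → ℝ := fun p => β * (c p.1 p.2).toReal with hh
  have hhmeas : Measurable h := (measurable_const.mul hcmeas.ennreal_toReal)
  have hhint : Integrable h π := by
    refine Integrable.const_mul ?_ β
    refine integrable_toReal_of_lintegral_ne_top hcmeas.aemeasurable hI
  have hptwise : ∀ᵐ p ∂π, f p.1 - f p.2 ≤ h p := by
    filter_upwards [hae] with p hp
    have := hdom p.1 p.2
    have hc : ((c p.1 p.2 : ℝ≥0∞) : EReal) = (((c p.1 p.2).toReal : ℝ) : EReal) := by
      lift (c p.1 p.2) to NNReal using hp.ne with d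
      simp [EReal.coe_nnreal_eq_coe_real]
    rw [hc, ← EReal.coe_mul] at this
    exact_mod_cast this
  have hmain : (∫ ξ, f ξ ∂μ₁) - ∫ ξ, f ξ ∂μ₂ ≤ β * (∫⁻ p, c p.1 p.2 ∂π).toReal := by
    have : (∫ ξ, f ξ ∂μ₁) - ∫ ξ, f ξ ∂μ₂ = ∫ p, (f p.1 - f p.2) ∂π := by
      rw [integral_sub hi1 hi2, h1, h2]
    rw [this]
    calc ∫ p, (f p.1 - f p.2) ∂π ≤ ∫ p, h p ∂π :=
          integral_mono_ae (hi1.sub hi2) hhint hptwise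
      _ = β * ∫ p, (c p.1 p.2).toReal ∂π := integral_const_mul β _
      _ = β * (∫⁻ p, c p.1 p.2 ∂π).toReal := by
          rw [integral_toReal hcmeas.aemeasurable hae]
  calc ENNReal.ofReal ((∫ ξ, f ξ ∂μ₁) - ∫ ξ, f ξ ∂μ₂)
      ≤ ENNReal.ofReal (β * (∫⁻ p, c p.1 p.2 ∂π).toReal) := ENNReal.ofReal_le_ofReal hmain
    _ = ENNReal.ofReal β * ENNReal.ofReal ((∫⁻ p, c p.1 p.2 ∂π).toReal) :=
          ENNReal.ofReal_mul hβ.le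
    _ = ENNReal.ofReal β * ∫⁻ p, c p.1 p.2 ∂π := by rw [ENNReal.ofReal_toReal hI]

/-- If `x_P` attains `v(P)` and `x_ν` attains `v(ν)` (both finite),
`Q(x_P,·)` and `Q(x_ν,·)` are integrable w.r.t. both `P` and `ν`, and regret domination
holds, then `|v(P) − v(ν)| ≤ β·max{T_c(P,ν), T_c(ν,P)}` in the extended reals. -/
theorem stmt1 {Ξ X : Type*} [MeasurableSpace Ξ] [Nonempty X]
    (g : X → ℝ) (Q : X → Ξ → ℝ) (hQmeas : ∀ x, Measurable (Q x))
    (P ν : Measure Ξ) [IsProbabilityMeasure P] [IsProbabilityMeasure ν]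
    (c : Ξ → Ξ → ℝ≥0∞) (hcmeas : Measurable fun p : Ξ × Ξ => c p.1 p.2)
    (β : ℝ) (hβ : 0 < β)
    -- regret domination: `R(ξ,ξ') = sup_x (Q(x,ξ) − Q(x,ξ')) ≤ β·c(ξ,ξ')`
    (hdom : ∀ ξ ξ' : Ξ,
      (⨆ x : X, ((Q x ξ - Q x ξ' : ℝ) : EReal)) ≤ (β : EReal) * ((c ξ ξ' : ℝ≥0∞) : EReal))
    -- `x_P` attains `v(P)` and `x_ν` attains `v(ν)`
    (vP vν : ℝ) (xP xν : X)
    (hattainP : g xP + ∫ ξ, Q xP ξ ∂P = vP)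
    (hminP : ∀ x : X, vP ≤ g x + ∫ ξ, Q x ξ ∂P)
    (hattainν : g xν + ∫ ξ, Q xν ξ ∂ν = vν)
    (hminν : ∀ x : X, vν ≤ g x + ∫ ξ, Q x ξ ∂ν)
    -- integrability of `Q(x_P,·)` and `Q(x_ν,·)` w.r.t. both measures
    (hintPP : Integrable (Q xP) P) (hintPν : Integrable (Q xP) ν)
    (hintνP : Integrable (Q xν) P) (hintνν : Integrable (Q xν) ν) :
    ((|vP - vν| : ℝ) : EReal)
      ≤ (β : EReal) * ((max (transportCost c P ν) (transportCost c ν P) : ℝ≥0∞) : EReal) := by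
  set b : ℝ≥0∞ := ENNReal.ofReal β with hb
  have hb0 : b ≠ 0 := by simp [hb, ENNReal.ofReal_eq_zero, not_le, hβ]
  have hbtop : b ≠ ∞ := ENNReal.ofReal_ne_top
  have hdom' : ∀ (x : X) (ξ ξ' : Ξ),
      ((Q x ξ - Q x ξ' : ℝ) : EReal) ≤ (β : EReal) * ((c ξ ξ' : ℝ≥0∞) : EReal) :=
    fun x ξ ξ' => (le_iSup (fun x => ((Q x ξ - Q x ξ' : ℝ) : EReal)) x).trans (hdom ξ ξ')
  have hmul : ∀ μ₁ μ₂ : Measure Ξ,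
      b * transportCost c μ₁ μ₂ = ⨅ π ∈ Couplings μ₁ μ₂, b * ∫⁻ p, c p.1 p.2 ∂π := by
    intro μ₁ μ₂
    rw [transportCost, iInf_subtype', iInf_subtype', ENNReal.mul_iInf_of_ne hb0 hbtop]
  -- first direction
  have h1 : ENNReal.ofReal (vP - vν) ≤ b * transportCost c P ν := by
    rw [hmul]
    refine le_iInf₂ fun π hπ => ?_
    have hkey := key (Q xν) (hQmeas xν) P ν c hcmeas β hβ (hdom' xν) hintνP hintνν π hπ
    refine le_trans (ENNReal.ofReal_le_ofReal ?_) hkey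
    have := hminP xν
    linarith
  -- second direction
  have h2 : ENNReal.ofReal (vν - vP) ≤ b * transportCost c ν P := by
    rw [hmul]
    refine le_iInf₂ fun π hπ => ?_
    have hkey := key (Q xP) (hQmeas xP) ν P c hcmeas β hβ (hdom' xP) hintPν hintPP π hπ
    refine le_trans (ENNReal.ofReal_le_ofReal ?_) hkey
    have := hminν xP
    linarith
  set M := max (transportCost c P ν) (transportCost c ν P) with hM
  have habs : ENNReal.ofReal |vP - vν| ≤ b * M := by
    rcases le_total vν vP with h | h
    · rw [abs_of_nonneg (by linarith)]
      exact h1.trans (mul_le_mul_right (le_max_left _ _) b)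
    · rw [abs_of_nonpos (by linarith), neg_sub]
      exact h2.trans (mul_le_mul_right (le_max_right _ _) b)
  calc ((|vP - vν| : ℝ) : EReal)
      = ((ENNReal.ofReal |vP - vν| : ℝ≥0∞) : EReal) := by
        rw [EReal.coe_ennreal_ofReal, max_eq_left (abs_nonneg _)]
    _ ≤ ((b * M : ℝ≥0∞) : EReal) := EReal.coe_ennreal_le_coe_ennreal_iff.mpr habs
    _ = (β : EReal) * ((M : ℝ≥0∞) : EReal) := by
        rw [EReal.coe_ennreal_mul, hb, EReal.coe_ennreal_ofReal, max_eq_left hβ.le]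
end

section
/- Suppose there exist x_P ∈ X attaining v(P) and x_ν ∈ X attaining v(ν) (both optimal values finite), that Q(x_P,·) and Q(x_ν,·) are integrable with respect to both P and ν, and that there exist a measurable cost c : Ξ × Ξ → [0,∞] and a constant β > 0 such that R(ξ,ξ') ≤ β·c(ξ,ξ') for all ξ, ξ' ∈ Ξ. If in addition c is symmetric, i.e., c(ξ,ξ') = c(ξ',ξ) for all ξ, ξ' ∈ Ξ, then |v(P) − v(ν)| ≤ β·T_c(P,ν), the inequality being interpreted in the extended reals. -/
open MeasureTheory ENNReal

/-- Under the assumptions of Statement 1, if in addition the ground cost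
`c` is symmetric, then `|v(P) − v(ν)| ≤ β·T_c(P,ν)` in the extended reals. -/
theorem stmt2 {Ξ X : Type*} [MeasurableSpace Ξ] [Nonempty X]
    (g : X → ℝ) (Q : X → Ξ → ℝ) (hQmeas : ∀ x, Measurable (Q x))
    (P ν : Measure Ξ) [IsProbabilityMeasure P] [IsProbabilityMeasure ν]
    (c : Ξ → Ξ → ℝ≥0∞) (hcmeas : Measurable fun p : Ξ × Ξ => c p.1 p.2)
    (β : ℝ) (hβ : 0 < β)
    -- symmetry of the ground cost
    (hsym : ∀ ξ ξ' : Ξ, c ξ ξ' = c ξ' ξ)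
    -- regret domination: `R(ξ,ξ') = sup_x (Q(x,ξ) − Q(x,ξ')) ≤ β·c(ξ,ξ')`
    (hdom : ∀ ξ ξ' : Ξ,
      (⨆ x : X, ((Q x ξ - Q x ξ' : ℝ) : EReal)) ≤ (β : EReal) * ((c ξ ξ' : ℝ≥0∞) : EReal))
    -- `x_P` attains `v(P)` and `x_ν` attains `v(ν)`
    (vP vν : ℝ) (xP xν : X)
    (hattainP : g xP + ∫ ξ, Q xP ξ ∂P = vP)
    (hminP : ∀ x : X, vP ≤ g x + ∫ ξ, Q x ξ ∂P)
    (hattainν : g xν + ∫ ξ, Q xν ξ ∂ν = vν)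
    (hminν : ∀ x : X, vν ≤ g x + ∫ ξ, Q x ξ ∂ν)
    -- integrability of `Q(x_P,·)` and `Q(x_ν,·)` w.r.t. both measures
    (hintPP : Integrable (Q xP) P) (hintPν : Integrable (Q xP) ν)
    (hintνP : Integrable (Q xν) P) (hintνν : Integrable (Q xν) ν) :
    ((|vP - vν| : ℝ) : EReal)
      ≤ (β : EReal) * ((transportCost c P ν : ℝ≥0∞) : EReal) := by
  -- pointwise consequence of `hdom` when the cost is finite
  have hpt : ∀ (x : X) (ξ ξ' : Ξ), c ξ ξ' ≠ ⊤ →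
      Q x ξ - Q x ξ' ≤ β * (c ξ ξ').toReal := by
    intro x ξ ξ' hfin
    have h1 : ((Q x ξ - Q x ξ' : ℝ) : EReal) ≤ (β : EReal) * ((c ξ ξ' : ℝ≥0∞) : EReal) :=
      le_trans (le_iSup (fun x : X => ((Q x ξ - Q x ξ' : ℝ) : EReal)) x) (hdom ξ ξ')
    have hc : ((c ξ ξ' : ℝ≥0∞) : EReal) = (((c ξ ξ').toReal : ℝ) : EReal) := by
      rw [← EReal.toReal_coe_ennreal (x := c ξ ξ')]
      exact (EReal.coe_toReal (by simpa using hfin) (by simp)).symm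
    rw [hc, ← EReal.coe_mul] at h1
    exact_mod_cast h1
  -- key bound for each coupling
  have key : ∀ π ∈ Couplings P ν,
      ENNReal.ofReal |vP - vν| ≤ ENNReal.ofReal β * ∫⁻ p, c p.1 p.2 ∂π := by
    rintro π ⟨hπprob, hfst, hsnd⟩
    by_cases hI : ∫⁻ p, c p.1 p.2 ∂π = ⊤
    · rw [hI, ENNReal.mul_top ((ENNReal.ofReal_pos.mpr hβ).ne')]
      exact le_top
    have hae : ∀ᵐ p ∂π, c p.1 p.2 < ⊤ := ae_lt_top hcmeas hI
    have hcint : Integrable (fun p : Ξ × Ξ => (c p.1 p.2).toReal) π :=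
      integrable_toReal_of_lintegral_ne_top hcmeas.aemeasurable hI
    have hβcint : Integrable (fun p : Ξ × Ξ => β * (c p.1 p.2).toReal) π := hcint.const_mul β
    -- integrability of the comparison functions over π
    have hint1 : ∀ x : X, Integrable (Q x) P → Integrable (fun p : Ξ × Ξ => Q x p.1) π := by
      intro x hx
      rw [← hfst] at hx
      exact (integrable_map_measure hx.aestronglyMeasurable
        measurable_fst.aemeasurable).mp hx
    have hint2 : ∀ x : X, Integrable (Q x) ν → Integrable (fun p : Ξ × Ξ => Q x p.2) π := by
      intro x hx
      rw [← hsnd] at hx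
      exact (integrable_map_measure hx.aestronglyMeasurable
        measurable_snd.aemeasurable).mp hx
    -- transfer integrals along the marginals
    have hmap1 : ∀ x : X, ∫ ξ, Q x ξ ∂P = ∫ p, Q x p.1 ∂π := by
      intro x
      rw [← hfst, integral_map measurable_fst.aemeasurable
        ((hQmeas x).aestronglyMeasurable)]
    have hmap2 : ∀ x : X, ∫ ξ, Q x ξ ∂ν = ∫ p, Q x p.2 ∂π := by
      intro x
      rw [← hsnd, integral_map measurable_snd.aemeasurable
        ((hQmeas x).aestronglyMeasurable)]
    set M : ℝ := β * (∫⁻ p, c p.1 p.2 ∂π).toReal with hM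
    have hMeq : ∫ p, β * (c p.1 p.2).toReal ∂π = M := by
      rw [integral_const_mul, integral_toReal hcmeas.aemeasurable hae]
    -- first direction
    have hd1 : vP - vν ≤ M := by
      have h1 : vP - vν ≤ ∫ ξ, Q xν ξ ∂P - ∫ ξ, Q xν ξ ∂ν := by
        have := hminP xν
        have h2 := hattainν
        linarith
      have h3 : ∫ p, Q xν p.1 ∂π - ∫ p, Q xν p.2 ∂π
          = ∫ p, (Q xν p.1 - Q xν p.2) ∂π :=
        (integral_sub (hint1 xν hintνP) (hint2 xν hintνν)).symm
      have h4 : ∫ p, (Q xν p.1 - Q xν p.2) ∂π ≤ ∫ p, β * (c p.1 p.2).toReal ∂π := by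
        refine integral_mono_ae ((hint1 xν hintνP).sub (hint2 xν hintνν)) hβcint ?_
        filter_upwards [hae] with p hp
        exact hpt xν p.1 p.2 hp.ne
      rw [hmap1 xν, hmap2 xν] at h1
      rw [hMeq] at h4
      linarith
    -- second direction, using symmetry of the cost
    have hd2 : vν - vP ≤ M := by
      have h1 : vν - vP ≤ ∫ ξ, Q xP ξ ∂ν - ∫ ξ, Q xP ξ ∂P := by
        have := hminν xP
        have h2 := hattainP
        linarith
      have h3 : ∫ p, Q xP p.2 ∂π - ∫ p, Q xP p.1 ∂π
          = ∫ p, (Q xP p.2 - Q xP p.1) ∂π :=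
        (integral_sub (hint2 xP hintPν) (hint1 xP hintPP)).symm
      have h4 : ∫ p, (Q xP p.2 - Q xP p.1) ∂π ≤ ∫ p, β * (c p.1 p.2).toReal ∂π := by
        refine integral_mono_ae ((hint2 xP hintPν).sub (hint1 xP hintPP)) hβcint ?_
        filter_upwards [hae] with p hp
        have := hpt xP p.2 p.1 (by rw [hsym p.2 p.1]; exact hp.ne)
        rwa [hsym p.2 p.1] at this
      rw [hmap1 xP, hmap2 xP] at h1
      rw [hMeq] at h4
      linarith
    have habs : |vP - vν| ≤ M := abs_sub_le_iff.mpr ⟨hd1, hd2⟩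
    calc ENNReal.ofReal |vP - vν| ≤ ENNReal.ofReal M := ENNReal.ofReal_le_ofReal habs
      _ = ENNReal.ofReal β * ENNReal.ofReal (∫⁻ p, c p.1 p.2 ∂π).toReal := by
          rw [hM, ENNReal.ofReal_mul hβ.le]
      _ = ENNReal.ofReal β * ∫⁻ p, c p.1 p.2 ∂π := by rw [ENNReal.ofReal_toReal hI]
  -- pass to the infimum
  have hb0 : ENNReal.ofReal β ≠ 0 := (ENNReal.ofReal_pos.mpr hβ).ne'
  have hbt : ENNReal.ofReal β ≠ ⊤ := ENNReal.ofReal_ne_top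
  have hinf : ENNReal.ofReal |vP - vν| ≤ ENNReal.ofReal β * transportCost c P ν := by
    rw [transportCost, ENNReal.mul_iInf_of_ne hb0 hbt]
    refine le_iInf fun π => ?_
    rw [ENNReal.mul_iInf_of_ne hb0 hbt]
    exact le_iInf fun hπ => key π hπ
  -- convert to `EReal`
  calc ((|vP - vν| : ℝ) : EReal)
      = ((ENNReal.ofReal |vP - vν| : ℝ≥0∞) : EReal) := by
        rw [EReal.coe_ennreal_ofReal, max_eq_left (abs_nonneg _)]
    _ ≤ ((ENNReal.ofReal β * transportCost c P ν : ℝ≥0∞) : EReal) :=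
        EReal.coe_ennreal_le_coe_ennreal_iff.mpr hinf
    _ = (β : EReal) * ((transportCost c P ν : ℝ≥0∞) : EReal) := by
        rw [EReal.coe_ennreal_mul, EReal.coe_ennreal_ofReal, max_eq_left hβ.le]
end

section
/- Assume: (i) relatively complete recourse: for every x ∈ X and ξ ∈ Ξ the feasible set {z : Wz = h(ξ) − T(ξ)x, z ≥ 0} is nonempty; (ii) strong duality attainment: for every x ∈ X and ξ ∈ Ξ there exists π in the dual feasible set D = {π ∈ ℝ^m : Wᵀπ ≤ q} with πᵀ(h(ξ) − T(ξ)x) = Q(x,ξ); (iii) bounded duals: there is M_π > 0 with ‖π‖_∞ ≤ M_π for every π ∈ D; (iv) bounded first stage: ‖x‖_∞ ≤ r for all x ∈ X. Then for all ξ, ξ' ∈ Ξ, the regret satisfies R(ξ,ξ') = sup_{x ∈ X} (Q(x,ξ) − Q(x,ξ')) ≤ M_π·(‖h(ξ) − h(ξ')‖₁ + r·‖T(ξ) − T(ξ')‖₁). -/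
open Matrix

/-- Value of the second-stage linear program with fixed recourse matrix `W`, cost `q`
and right-hand side `b`: `inf { qᵀz : Wz = b, z ≥ 0 }`. -/
noncomputable def lpValue {m k : ℕ} (W : Matrix (Fin m) (Fin k) ℝ) (q : Fin k → ℝ)
    (b : Fin m → ℝ) : ℝ :=
  sInf {r : ℝ | ∃ z : Fin k → ℝ, (∀ i, 0 ≤ z i) ∧ W.mulVec z = b ∧ r = q ⬝ᵥ z}

/-- Weak duality: a dual feasible `π` gives a lower bound on `lpValue`, provided the
primal is feasible. -/
lemma weak_duality {m k : ℕ} (W : Matrix (Fin m) (Fin k) ℝ) (q : Fin k → ℝ)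
    (b : Fin m → ℝ) (π : Fin m → ℝ) (hπ : ∀ j, Wᵀ.mulVec π j ≤ q j)
    (hne : ∃ z : Fin k → ℝ, (∀ i, 0 ≤ z i) ∧ W.mulVec z = b) :
    π ⬝ᵥ b ≤ lpValue W q b := by
  apply le_csInf
  · obtain ⟨z, hz, hWz⟩ := hne
    exact ⟨q ⬝ᵥ z, z, hz, hWz, rfl⟩
  · rintro s ⟨z, hz, hWz, rfl⟩
    have h1 : π ⬝ᵥ b = Wᵀ.mulVec π ⬝ᵥ z := by
      rw [← hWz, Matrix.dotProduct_mulVec, Matrix.mulVec_transpose]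
    rw [h1]
    exact Finset.sum_le_sum fun j _ => mul_le_mul_of_nonneg_right (hπ j) (hz j)

/-- Under relatively complete recourse, dual strong-duality attainment,
bounded dual feasible set (`‖π‖_∞ ≤ M_π`) and bounded first stage (`‖x‖_∞ ≤ r`), the regret
`R(ξ,ξ') = sup_{x ∈ X} (Q(x,ξ) − Q(x,ξ'))` satisfies
`R(ξ,ξ') ≤ M_π·(‖h(ξ) − h(ξ')‖₁ + r·‖T(ξ) − T(ξ')‖₁)`. -/
theorem stmt8 {Ξ : Type*} {n m k : ℕ}
    (X : Set (Fin n → ℝ)) (hX : X.Nonempty)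
    (W : Matrix (Fin m) (Fin k) ℝ) (q : Fin k → ℝ)
    (h : Ξ → Fin m → ℝ) (T : Ξ → Matrix (Fin m) (Fin n) ℝ)
    (Q : (Fin n → ℝ) → Ξ → ℝ)
    (hQ : ∀ x ξ, Q x ξ = lpValue W q (h ξ - (T ξ).mulVec x))
    -- (i) relatively complete recourse
    (hfeas : ∀ x ∈ X, ∀ ξ : Ξ, ∃ z : Fin k → ℝ,
      (∀ i, 0 ≤ z i) ∧ W.mulVec z = h ξ - (T ξ).mulVec x)
    -- (ii) strong duality attainment on the dual feasible set `D = {π : Wᵀπ ≤ q}`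
    (hdual : ∀ x ∈ X, ∀ ξ : Ξ, ∃ π : Fin m → ℝ,
      (∀ j, Wᵀ.mulVec π j ≤ q j) ∧ π ⬝ᵥ (h ξ - (T ξ).mulVec x) = Q x ξ)
    -- (iii) bounded duals
    (Mπ : ℝ) (hMπ : 0 < Mπ)
    (hbdd : ∀ π : Fin m → ℝ, (∀ j, Wᵀ.mulVec π j ≤ q j) → ∀ i, |π i| ≤ Mπ)
    -- (iv) bounded first stage
    (r : ℝ) (hr : ∀ x ∈ X, ∀ i, |x i| ≤ r) :
    ∀ ξ ξ' : Ξ,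
      (⨆ x ∈ X, ((Q x ξ - Q x ξ' : ℝ) : EReal))
        ≤ ((Mπ * ((∑ i, |h ξ i - h ξ' i|) + r * ∑ i, ∑ j, |T ξ i j - T ξ' i j|) : ℝ) : EReal) := by
  intro ξ ξ'
  apply iSup₂_le
  intro x hx
  rw [EReal.coe_le_coe_iff]
  obtain ⟨π, hπfeas, hπeq⟩ := hdual x hx ξ
  -- weak duality at ξ'
  have hwd : π ⬝ᵥ (h ξ' - (T ξ').mulVec x) ≤ Q x ξ' := by
    rw [hQ x ξ']
    exact weak_duality W q _ π hπfeas
      (by obtain ⟨z, h1, h2⟩ := hfeas x hx ξ'; exact ⟨z, h1, h2⟩)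
  have key : Q x ξ - Q x ξ'
      ≤ π ⬝ᵥ ((h ξ - h ξ') - ((T ξ).mulVec x - (T ξ').mulVec x)) := by
    have : π ⬝ᵥ ((h ξ - h ξ') - ((T ξ).mulVec x - (T ξ').mulVec x))
        = π ⬝ᵥ (h ξ - (T ξ).mulVec x) - π ⬝ᵥ (h ξ' - (T ξ').mulVec x) := by
      rw [← dotProduct_sub]
      congr 1
      funext i
      simp [Pi.sub_apply]
      ring
    rw [this, hπeq]
    linarith
  refine key.trans ?_
  -- bound the dot product
  set v : Fin m → ℝ := (h ξ - h ξ') - ((T ξ).mulVec x - (T ξ').mulVec x) with hv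
  have habs : π ⬝ᵥ v ≤ ∑ i, Mπ * |v i| := by
    refine (Finset.sum_le_sum fun i _ => ?_)
    calc π i * v i ≤ |π i * v i| := le_abs_self _
      _ = |π i| * |v i| := abs_mul _ _
      _ ≤ Mπ * |v i| := mul_le_mul_of_nonneg_right (hbdd π hπfeas i) (abs_nonneg _)
  refine habs.trans ?_
  rw [← Finset.mul_sum]
  apply mul_le_mul_of_nonneg_left _ hMπ.le
  have hvi : ∀ i, |v i| ≤ |h ξ i - h ξ' i| + ∑ j, |T ξ i j - T ξ' i j| * r := by
    intro i
    have : v i = (h ξ i - h ξ' i) - ∑ j, (T ξ i j - T ξ' i j) * x j := by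
      simp [hv, Matrix.mulVec, dotProduct, Finset.sum_sub_distrib]
      ring_nf
      rw [← Finset.sum_sub_distrib]
    rw [this]
    refine (abs_sub _ _).trans ?_
    gcongr
    refine (Finset.abs_sum_le_sum_abs _ _).trans ?_
    refine Finset.sum_le_sum fun j _ => ?_
    rw [abs_mul]
    exact mul_le_mul_of_nonneg_left (hr x hx j) (abs_nonneg _)
  calc ∑ i, |v i| ≤ ∑ i, (|h ξ i - h ξ' i| + ∑ j, |T ξ i j - T ξ' i j| * r) :=
        Finset.sum_le_sum fun i _ => hvi i
    _ = (∑ i, |h ξ i - h ξ' i|) + r * ∑ i, ∑ j, |T ξ i j - T ξ' i j| := by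
        rw [Finset.sum_add_distrib, Finset.mul_sum]
        congr 1
        refine Finset.sum_congr rfl fun i _ => ?_
        rw [Finset.mul_sum]
        exact Finset.sum_congr rfl fun j _ => mul_comm _ _
end

section
/- Let Ξ be a normed space with its Borel σ-algebra, X a nonempty set, g : X → ℝ, and Q : X × Ξ → ℝ with Q(x,·) measurable for each x ∈ X. Let P and ν be Borel probability measures on Ξ, and suppose: (i) there exist x_P, x_ν ∈ X attaining v(P) and v(ν) respectively (both finite), with Q(x_P,·) and Q(x_ν,·) integrable with respect to both P and ν; (ii) there is K > 0 such that |Q(x,ξ) − Q(x,ξ')| ≤ K·‖ξ − ξ'‖ for all x ∈ X and all ξ, ξ' ∈ Ξ. Then |v(P) − v(ν)| ≤ K·W₁(P,ν), the inequality being interpreted in the extended reals. -/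
open MeasureTheory ENNReal

/-- The `1`-Wasserstein distance on a normed space:
`W₁(μ,ν) = inf_π ∫ ‖ξ − ξ'‖ dπ`, in `[0,∞]`. -/
noncomputable def wasserstein1 {Ξ : Type*} [NormedAddCommGroup Ξ] [MeasurableSpace Ξ]
    (μ ν : Measure Ξ) : ℝ≥0∞ :=
  ⨅ π ∈ Couplings μ ν, ∫⁻ p, ENNReal.ofReal ‖p.1 - p.2‖ ∂π

/-- If `x_P` and `x_ν` attain `v(P)` and `v(ν)` (both finite) with the
corresponding recourse functions integrable, and `Q` is uniformly `K`-Lipschitz in the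
scenario (`|Q(x,ξ) − Q(x,ξ')| ≤ K·‖ξ − ξ'‖`), then `|v(P) − v(ν)| ≤ K·W₁(P,ν)` in the
extended reals. -/
theorem stmt17 {Ξ X : Type*} [NormedAddCommGroup Ξ] [MeasurableSpace Ξ] [BorelSpace Ξ]
    [Nonempty X]
    (g : X → ℝ) (Q : X → Ξ → ℝ) (hQmeas : ∀ x, Measurable (Q x))
    (P ν : Measure Ξ) [IsProbabilityMeasure P] [IsProbabilityMeasure ν]
    -- (i) attainment of both optimal values, with integrability
    (vP vν : ℝ) (xP xν : X)
    (hattainP : g xP + ∫ ξ, Q xP ξ ∂P = vP)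
    (hminP : ∀ x : X, vP ≤ g x + ∫ ξ, Q x ξ ∂P)
    (hattainν : g xν + ∫ ξ, Q xν ξ ∂ν = vν)
    (hminν : ∀ x : X, vν ≤ g x + ∫ ξ, Q x ξ ∂ν)
    (hintPP : Integrable (Q xP) P) (hintPν : Integrable (Q xP) ν)
    (hintνP : Integrable (Q xν) P) (hintνν : Integrable (Q xν) ν)
    -- (ii) uniform Lipschitz continuity in the scenario
    (K : ℝ) (hK : 0 < K)
    (hlip : ∀ x : X, ∀ ξ ξ' : Ξ, |Q x ξ - Q x ξ'| ≤ K * ‖ξ - ξ'‖) :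
    ((|vP - vν| : ℝ) : EReal) ≤ (K : EReal) * ((wasserstein1 P ν : ℝ≥0∞) : EReal) := by
  have hKnn : (0:ℝ) ≤ K := hK.le
  have hK0 : ENNReal.ofReal K ≠ 0 := (ENNReal.ofReal_pos.mpr hK).ne'
  have hKtop : ENNReal.ofReal K ≠ ⊤ := ENNReal.ofReal_ne_top
  have percouple : ∀ π ∈ Couplings P ν,
      ENNReal.ofReal |vP - vν| ≤ ENNReal.ofReal K * ∫⁻ p, ENNReal.ofReal ‖p.1 - p.2‖ ∂π := by
    rintro π ⟨hπprob, hfst, hsnd⟩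
    have key : ∀ f : Ξ → ℝ, Measurable f → Integrable f P → Integrable f ν →
        (∀ a b : Ξ, |f a - f b| ≤ K * ‖a - b‖) →
        ENNReal.ofReal |∫ ξ, f ξ ∂P - ∫ ξ, f ξ ∂ν| ≤
          ENNReal.ofReal K * ∫⁻ p, ENNReal.ofReal ‖p.1 - p.2‖ ∂π := by
      intro f hf hfP hfν hflip
      have h1 : Integrable (fun p : Ξ × Ξ => f p.1) π := by
        rw [← hfst] at hfP
        exact (integrable_map_measure hf.aestronglyMeasurable
          measurable_fst.aemeasurable).mp hfP
      have h2 : Integrable (fun p : Ξ × Ξ => f p.2) π := by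
        rw [← hsnd] at hfν
        exact (integrable_map_measure hf.aestronglyMeasurable
          measurable_snd.aemeasurable).mp hfν
      have e1 : ∫ ξ, f ξ ∂P = ∫ p : Ξ × Ξ, f p.1 ∂π := by
        rw [← hfst, integral_map measurable_fst.aemeasurable hf.aestronglyMeasurable]
      have e2 : ∫ ξ, f ξ ∂ν = ∫ p : Ξ × Ξ, f p.2 ∂π := by
        rw [← hsnd, integral_map measurable_snd.aemeasurable hf.aestronglyMeasurable]
      have hd : Integrable (fun p : Ξ × Ξ => |f p.1 - f p.2|) π := (h1.sub h2).abs
      calc ENNReal.ofReal |∫ ξ, f ξ ∂P - ∫ ξ, f ξ ∂ν|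
          = ENNReal.ofReal |∫ p : Ξ × Ξ, (f p.1 - f p.2) ∂π| := by
            rw [e1, e2, integral_sub h1 h2]
        _ = (‖∫ p : Ξ × Ξ, (f p.1 - f p.2) ∂π‖₊ : ℝ≥0∞) := by
            rw [← Real.norm_eq_abs, ofReal_norm, enorm_eq_nnnorm]
        _ ≤ ∫⁻ p : Ξ × Ξ, (‖f p.1 - f p.2‖₊ : ℝ≥0∞) ∂π :=
            enorm_integral_le_lintegral_enorm _
        _ = ∫⁻ p : Ξ × Ξ, ENNReal.ofReal |f p.1 - f p.2| ∂π := by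
            simp_rw [← enorm_eq_nnnorm, ← ofReal_norm, Real.norm_eq_abs]
        _ ≤ ∫⁻ p : Ξ × Ξ, ENNReal.ofReal (K * ‖p.1 - p.2‖) ∂π :=
            lintegral_mono fun p => ENNReal.ofReal_le_ofReal (hflip _ _)
        _ = ENNReal.ofReal K * ∫⁻ p, ENNReal.ofReal ‖p.1 - p.2‖ ∂π := by
            simp_rw [ENNReal.ofReal_mul hKnn]
            exact lintegral_const_mul' _ _ hKtop
    have dP : vP - vν ≤ ∫ ξ, Q xν ξ ∂P - ∫ ξ, Q xν ξ ∂ν := by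
      have := hminP xν; linarith [hattainν]
    have dν : vν - vP ≤ ∫ ξ, Q xP ξ ∂ν - ∫ ξ, Q xP ξ ∂P := by
      have := hminν xP; linarith [hattainP]
    rcases abs_cases (vP - vν) with ⟨h, _⟩ | ⟨h, _⟩
    · rw [h]
      exact le_trans (ENNReal.ofReal_le_ofReal (dP.trans (le_abs_self _)))
        (key (Q xν) (hQmeas xν) hintνP hintνν (hlip xν))
    · rw [h]
      have : -(vP - vν) ≤ |∫ ξ, Q xP ξ ∂P - ∫ ξ, Q xP ξ ∂ν| := by
        rw [abs_sub_comm]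
        exact le_trans (by linarith) (le_abs_self _)
      exact le_trans (ENNReal.ofReal_le_ofReal this)
        (key (Q xP) (hQmeas xP) hintPP hintPν (hlip xP))
  have main : ENNReal.ofReal |vP - vν| ≤ ENNReal.ofReal K * wasserstein1 P ν := by
    rw [mul_comm, ← ENNReal.div_le_iff_le_mul (Or.inl hK0) (Or.inl hKtop)]
    refine le_iInf₂ fun π hπ => ?_
    rw [ENNReal.div_le_iff_le_mul (Or.inl hK0) (Or.inl hKtop), mul_comm]
    exact percouple π hπ
  have h1 : ((|vP - vν| : ℝ) : EReal) = ((ENNReal.ofReal |vP - vν| : ℝ≥0∞) : EReal) := by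
    rw [EReal.coe_ennreal_ofReal, max_eq_left (abs_nonneg _)]
  have h2 : (K : EReal) * ((wasserstein1 P ν : ℝ≥0∞) : EReal)
      = ((ENNReal.ofReal K * wasserstein1 P ν : ℝ≥0∞) : EReal) := by
    rw [EReal.coe_ennreal_mul, EReal.coe_ennreal_ofReal, max_eq_left hKnn]
  rw [h1, h2]
  exact EReal.coe_ennreal_le_coe_ennreal_iff.mpr main
end
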